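/- Let L = {(0,0),(0,1),(1,0),(3,3)} ⊆ ℤ₄² and T = L^m ⊆ ℤ₄^{2m} (m-fold product, viewing ℤ₄^{2m} as (ℤ₄²)^m). Then the number of x ∈ ℤ₄^{2m} admitting at least one representation x = t₁ − t₂ with t₁, t₂ ∈ T equals 13^m, and the number of x admitting at least one representation x = t₁ + t₂ equals 10^m. -/
import Mathlib

def Lset : Finset (ZMod 4 × ZMod 4) := {(0, 0), (0, 1), (1, 0), (3, 3)}

def Lpow (m : ℕ) : Finset (Fin m → ZMod 4 × ZMod 4) :=
  Finset.univ.filter fun t => ∀ j, t j ∈ Lset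

lemma key (m : ℕ) (f : (ZMod 4 × ZMod 4) → (ZMod 4 × ZMod 4) → (ZMod 4 × ZMod 4)) :
    ((Lpow m ×ˢ Lpow m).image fun p => fun j => f (p.1 j) (p.2 j)) =
      Fintype.piFinset (fun _ : Fin m => (Lset ×ˢ Lset).image fun q => f q.1 q.2) := by
  ext x
  rw [Finset.mem_image, Fintype.mem_piFinset]
  constructor
  · rintro ⟨⟨a, b⟩, hab, rfl⟩ j
    rw [Finset.mem_product] at hab
    simp only [Lpow, Finset.mem_filter, Finset.mem_univ, true_and] at hab
    exact Finset.mem_image.2 ⟨(a j, b j), Finset.mem_product.2 ⟨hab.1 j, hab.2 j⟩, rfl⟩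
  · intro h
    choose q hq hfq using fun j => Finset.mem_image.1 (h j)
    refine ⟨(fun j => (q j).1, fun j => (q j).2), ?_, funext fun j => hfq j⟩
    rw [Finset.mem_product]
    simp only [Lpow, Finset.mem_filter, Finset.mem_univ, true_and]
    exact ⟨fun j => (Finset.mem_product.1 (hq j)).1, fun j => (Finset.mem_product.1 (hq j)).2⟩

/-- for `T = L^m`, the number of `x` admitting at least one representation
`x = t₁ - t₂` with `t₁, t₂ ∈ T` equals `13^m`, and the number of `x` admitting at least one
representation `x = t₁ + t₂` equals `10^m`. -/
theorem stmt16 (m : ℕ) :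
    (((Lpow m) ×ˢ (Lpow m)).image fun p => p.1 - p.2).card = 13 ^ m ∧
    (((Lpow m) ×ˢ (Lpow m)).image fun p => p.1 + p.2).card = 10 ^ m := by
  constructor
  · have h : ((Lpow m ×ˢ Lpow m).image fun p => p.1 - p.2) =
        ((Lpow m ×ˢ Lpow m).image fun p => fun j => (p.1 j) - (p.2 j)) := rfl
    rw [h, key m (· - ·), Fintype.card_piFinset]
    have h13 : ((Lset ×ˢ Lset).image fun q => q.1 - q.2).card = 13 := by decide
    simp [h13]
  · have h : ((Lpow m ×ˢ Lpow m).image fun p => p.1 + p.2) =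
        ((Lpow m ×ˢ Lpow m).image fun p => fun j => (p.1 j) + (p.2 j)) := rfl
    rw [h, key m (· + ·), Fintype.card_piFinset]
    have h10 : ((Lset ×ˢ Lset).image fun q => q.1 + q.2).card = 10 := by decide
    simp [h10]
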